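/- The period semiring is a commutative semiring: 0_T and 1_T are coalesced, the operations +_T and ·_T map pairs of coalesced temporal K-elements to coalesced temporal K-elements, +_T and ·_T are commutative and associative on coalesced elements, 0_T is a neutral element for +_T, 1_T is a neutral element for ·_T, ·_T distributes over +_T, and k ·_T 0_T = 0_T for every coalesced k. -/
import Mathlib


open scoped Classical

namespace TemporalK

variable {K : Type*}

/-- An interval over the time domain `{0, ..., N-1}`: a pair `(b, e)` with `b < e ≤ N`. -/
abbrev TInterval (N : ℕ) := {I : Fin (N + 1) × Fin (N + 1) // I.1 < I.2}

/-- A temporal `K`-element: a function assigning to each interval an element of `K`. -/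
abbrev TempEl (N : ℕ) (K : Type*) := TInterval N → K

/-- The interval `I = (b, e)` contains the time point `T` iff `b ≤ T < e`. -/
def Contains {N : ℕ} (I : TInterval N) (T : ℕ) : Prop :=
  (I.val.1 : ℕ) ≤ T ∧ T < (I.val.2 : ℕ)

/-- The timeslice of `𝒯` at time point `T`: the sum of `𝒯 I` over all intervals `I`
containing `T`. -/
noncomputable def slice {N : ℕ} [CommSemiring K] (𝒯 : TempEl N K) (T : ℕ) : K :=
  ∑ I ∈ Finset.univ.filter (fun I : TInterval N => Contains I T), 𝒯 I

/-- `T` is an (annotation) changepoint of `𝒯` iff `T = 0` or the timeslices at `T - 1`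
and `T` differ. -/
def Changepoint {N : ℕ} [CommSemiring K] (𝒯 : TempEl N K) (T : ℕ) : Prop :=
  T = 0 ∨ slice 𝒯 (T - 1) ≠ slice 𝒯 T

/-- `I = (b, e)` is a changepoint interval of `𝒯` iff `b` is a changepoint, `e` is a
changepoint or equals `N`, and no time point strictly between `b` and `e` is a changepoint. -/
def CPInterval {N : ℕ} [CommSemiring K] (𝒯 : TempEl N K) (I : TInterval N) : Prop :=
  Changepoint 𝒯 (I.val.1 : ℕ) ∧
    (Changepoint 𝒯 (I.val.2 : ℕ) ∨ (I.val.2 : ℕ) = N) ∧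
    ∀ T : ℕ, (I.val.1 : ℕ) < T → T < (I.val.2 : ℕ) → ¬ Changepoint 𝒯 T

/-- `K`-coalescing: maps changepoint intervals `(b, e)` to the timeslice at `b` and all
other intervals to `0`. -/
noncomputable def coal {N : ℕ} [CommSemiring K] (𝒯 : TempEl N K) : TempEl N K :=
  fun I => if CPInterval 𝒯 I then slice 𝒯 (I.val.1 : ℕ) else 0

/-- Snapshot equivalence: equal timeslices at every time point. -/
def SnapEq {N : ℕ} [CommSemiring K] (k k' : TempEl N K) : Prop :=
  ∀ T : ℕ, T < N → slice k T = slice k' T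

/-- A temporal `K`-element is coalesced iff it is the `K`-coalescing of some
temporal `K`-element. -/
def Coalesced {N : ℕ} [CommSemiring K] (k : TempEl N K) : Prop :=
  ∃ 𝒯 : TempEl N K, k = coal 𝒯

/-- Pointwise addition of temporal `K`-elements. -/
def padd {N : ℕ} [CommSemiring K] (k k' : TempEl N K) : TempEl N K :=
  fun I => k I + k' I

/-- Pointwise multiplication of temporal `K`-elements:
`(k ·_P k')(I) = Σ k(I')·k'(I'')` over all pairs `(I', I'')` whose intersection is
nonempty and equals `I`. -/
noncomputable def pmul {N : ℕ} [CommSemiring K] (k k' : TempEl N K) : TempEl N K :=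
  fun I =>
    ∑ p ∈ Finset.univ.filter (fun p : TInterval N × TInterval N =>
        max (p.1.val.1 : ℕ) (p.2.val.1 : ℕ) < min (p.1.val.2 : ℕ) (p.2.val.2 : ℕ) ∧
        (I.val.1 : ℕ) = max (p.1.val.1 : ℕ) (p.2.val.1 : ℕ) ∧
        (I.val.2 : ℕ) = min (p.1.val.2 : ℕ) (p.2.val.2 : ℕ)),
      k p.1 * k' p.2

/-- Addition of the period semiring: coalesced pointwise addition. -/
noncomputable def tadd {N : ℕ} [CommSemiring K] (k k' : TempEl N K) : TempEl N K :=
  coal (padd k k')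

/-- Multiplication of the period semiring: coalesced pointwise multiplication. -/
noncomputable def tmul {N : ℕ} [CommSemiring K] (k k' : TempEl N K) : TempEl N K :=
  coal (pmul k k')

/-- The zero of the period semiring: maps every interval to `0`. -/
def zeroT (N : ℕ) (K : Type*) [CommSemiring K] : TempEl N K := fun _ => 0

/-- The one of the period semiring: maps the interval `(0, N)` to `1` and every other
interval to `0`. -/
def oneT (N : ℕ) (K : Type*) [CommSemiring K] : TempEl N K :=
  fun I => if (I.val.1 : ℕ) = 0 ∧ (I.val.2 : ℕ) = N then 1 else 0

/-- Encoding of an annotation history `f : time points → K` as a coalesced temporal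
`K`-element: coalesce the element assigning `f T` to each singleton interval `(T, T+1)`. -/
noncomputable def enc {N : ℕ} [CommSemiring K] (f : Fin N → K) : TempEl N K :=
  coal (fun I =>
    if h : (I.val.2 : ℕ) = (I.val.1 : ℕ) + 1 then
      f ⟨(I.val.1 : ℕ), by have := I.val.2.isLt; omega⟩
    else 0)

/-- The natural preorder of the semiring `K`. -/
def nle [CommSemiring K] (a b : K) : Prop := ∃ c, a + c = b

/-- The natural preorder of the period semiring (on coalesced temporal `K`-elements). -/
def tle {N : ℕ} [CommSemiring K] (k k' : TempEl N K) : Prop :=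
  ∃ k'' : TempEl N K, Coalesced k'' ∧ tadd k k'' = k'

/-- The pointwise monus: assigns `τ_T(k) −_K τ_T(k')` to each singleton interval
`(T, T+1)` and `0` to every non-singleton interval. -/
noncomputable def pmonus {N : ℕ} [CommSemiring K] (monus : K → K → K)
    (k k' : TempEl N K) : TempEl N K :=
  fun I =>
    if (I.val.2 : ℕ) = (I.val.1 : ℕ) + 1 then
      monus (slice k (I.val.1 : ℕ)) (slice k' (I.val.1 : ℕ))
    else 0

/-- The monus of the period semiring: coalesced pointwise monus. -/
noncomputable def tmonus {N : ℕ} [CommSemiring K] (monus : K → K → K)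
    (k k' : TempEl N K) : TempEl N K :=
  coal (pmonus monus k k')

end TemporalK

open TemporalK

section Aux

namespace TemporalK

variable {N : ℕ} {K : Type*} [CommSemiring K]

lemma slice_of_le (𝒯 : TempEl N K) {T : ℕ} (hT : N ≤ T) : slice 𝒯 T = 0 := by
  unfold slice
  rw [Finset.filter_false_of_mem, Finset.sum_empty]
  intro I _ h
  obtain ⟨h1, h2⟩ := h
  have h3 := I.val.2.isLt
  omega

lemma snap_all {𝒯 𝒯' : TempEl N K} (h : ∀ T, T < N → slice 𝒯 T = slice 𝒯' T) (T : ℕ) :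
    slice 𝒯 T = slice 𝒯' T := by
  rcases lt_or_ge T N with hT | hT
  · exact h T hT
  · rw [slice_of_le _ hT, slice_of_le _ hT]

lemma coal_congr {𝒯 𝒯' : TempEl N K} (h : ∀ T, T < N → slice 𝒯 T = slice 𝒯' T) :
    coal 𝒯 = coal 𝒯' := by
  have hs := snap_all h
  have hc : ∀ T, Changepoint 𝒯 T ↔ Changepoint 𝒯' T := by
    intro T; unfold Changepoint; rw [hs, hs]
  have hcp : ∀ I, CPInterval 𝒯 I ↔ CPInterval 𝒯' I := by
    intro I; unfold CPInterval; simp only [hc]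
  funext I
  unfold coal
  simp only [hcp, hs]

lemma slice_coal (𝒯 : TempEl N K) {T : ℕ} (hT : T < N) : slice (coal 𝒯) T = slice 𝒯 T := by
  classical
  set b := Nat.findGreatest (Changepoint 𝒯) T with hbdef
  have hb_le : b ≤ T := Nat.findGreatest_le T
  have hb_cp : Changepoint 𝒯 b := by
    rcases Nat.eq_zero_or_pos b with h0 | hpos
    · rw [h0]; exact Or.inl rfl
    · exact Nat.findGreatest_spec (Nat.zero_le T) (Or.inl rfl)
  have he_ex : ∃ e, T < e ∧ e ≤ N ∧ (Changepoint 𝒯 e ∨ e = N) :=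
    ⟨N, hT, le_refl N, Or.inr rfl⟩
  set e := Nat.find he_ex with hedef
  obtain ⟨heT, heN, hecp⟩ := Nat.find_spec he_ex
  have hmid : ∀ T', b < T' → T' < e → ¬ Changepoint 𝒯 T' := by
    intro T' h1 h2 hc
    rcases le_or_gt T' T with h | h
    · exact Nat.findGreatest_is_greatest h1 h hc
    · exact Nat.find_min he_ex h2 ⟨h, by omega, Or.inl hc⟩
  have hbN : b < N + 1 := by omega
  have heN1 : e < N + 1 := by omega
  set I₀ : TInterval N := ⟨(⟨b, hbN⟩, ⟨e, heN1⟩), Fin.mk_lt_mk.mpr (by omega)⟩ with hI0def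
  have hI₀ : CPInterval 𝒯 I₀ := by
    refine ⟨hb_cp, hecp, ?_⟩
    intro T' h1 h2
    exact hmid T' h1 h2
  have huniq : ∀ J : TInterval N, CPInterval 𝒯 J → Contains J T → J = I₀ := by
    intro J hJ hJT
    obtain ⟨hJ1, hJ2, hJ3⟩ := hJ
    obtain ⟨hT1, hT2⟩ := hJT
    have hJ2N : (J.val.2 : ℕ) ≤ N := by have := J.val.2.isLt; omega
    have hb' : (J.val.1 : ℕ) ≤ b := Nat.le_findGreatest hT1 hJ1
    have hbb : (J.val.1 : ℕ) = b := by
      by_contra hne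
      exact hJ3 b (lt_of_le_of_ne hb' hne) (by omega) hb_cp
    have he' : e ≤ (J.val.2 : ℕ) := Nat.find_le ⟨hT2, hJ2N, hJ2⟩
    have hee : (J.val.2 : ℕ) = e := by
      by_contra hne
      have hlt : e < (J.val.2 : ℕ) := lt_of_le_of_ne he' (Ne.symm hne)
      rcases hecp with hcp | hNeq
      · exact hJ3 e (by omega) hlt hcp
      · omega
    apply Subtype.ext
    apply Prod.ext <;> apply Fin.ext <;> simpa [hI0def]
  have h1 : slice (coal 𝒯) T = coal 𝒯 I₀ := by
    unfold slice
    apply Finset.sum_eq_single_of_mem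
    · simp only [Finset.mem_filter, Finset.mem_univ, true_and]
      exact ⟨hb_le, heT⟩
    · intro J hJmem hne
      simp only [Finset.mem_filter, Finset.mem_univ, true_and] at hJmem
      unfold coal
      rw [if_neg]
      intro hcp
      exact hne (huniq J hcp hJmem)
  rw [h1]
  have h2 : coal 𝒯 I₀ = slice 𝒯 b := by unfold coal; rw [if_pos hI₀]
  rw [h2]
  have key : ∀ d, b + d ≤ T → slice 𝒯 (b + d) = slice 𝒯 b := by
    intro d
    induction d with
    | zero => intro _; rfl
    | succ n ih =>
      intro hd
      have hnc : ¬ Changepoint 𝒯 (b + n + 1) := hmid _ (by omega) (by omega)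
      unfold Changepoint at hnc
      push_neg at hnc
      have heq : slice 𝒯 (b + n) = slice 𝒯 (b + n + 1) := by
        have := hnc.2
        simpa using this
      have := ih (by omega)
      rw [show b + (n+1) = b + n + 1 by omega, ← heq, this]
  have := key (T - b) (by omega)
  rw [show b + (T - b) = T by omega] at this
  exact this.symm

lemma slice_padd (k k' : TempEl N K) (T : ℕ) :
    slice (padd k k') T = slice k T + slice k' T := by
  unfold slice padd
  rw [Finset.sum_add_distrib]

lemma slice_zero (T : ℕ) : slice (zeroT N K) T = 0 :=
  Finset.sum_eq_zero (fun _ _ => rfl)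

lemma slice_one {T : ℕ} (hT : T < N) : slice (oneT N K) T = 1 := by
  unfold slice
  set I₁ : TInterval N := ⟨(⟨0, Nat.succ_pos N⟩, ⟨N, Nat.lt_succ_self N⟩),
    Fin.mk_lt_mk.mpr (by omega)⟩ with hI1
  rw [Finset.sum_eq_single_of_mem I₁]
  · unfold oneT
    rw [if_pos ⟨rfl, rfl⟩]
  · simp only [Finset.mem_filter, Finset.mem_univ, true_and]
    exact ⟨Nat.zero_le T, hT⟩
  · intro J _ hne
    unfold oneT
    rw [if_neg]
    rintro ⟨h1, h2⟩
    exact hne (Subtype.ext (Prod.ext (Fin.ext h1) (Fin.ext h2)))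

/-- The intersection of the two intervals in a pair (junk value if they do not meet). -/
noncomputable def isect (p : TInterval N × TInterval N) : TInterval N :=
  if h : max (p.1.val.1 : ℕ) (p.2.val.1 : ℕ) < min (p.1.val.2 : ℕ) (p.2.val.2 : ℕ) then
    ⟨(⟨max (p.1.val.1 : ℕ) (p.2.val.1 : ℕ), by
        have := p.1.val.1.isLt; have := p.2.val.1.isLt; omega⟩,
      ⟨min (p.1.val.2 : ℕ) (p.2.val.2 : ℕ), by
        have := p.1.val.2.isLt; omega⟩), Fin.mk_lt_mk.mpr h⟩
  else p.1

lemma isect_spec (p : TInterval N × TInterval N)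
    (h : max (p.1.val.1 : ℕ) (p.2.val.1 : ℕ) < min (p.1.val.2 : ℕ) (p.2.val.2 : ℕ)) :
    ((isect p).val.1 : ℕ) = max (p.1.val.1 : ℕ) (p.2.val.1 : ℕ) ∧
    ((isect p).val.2 : ℕ) = min (p.1.val.2 : ℕ) (p.2.val.2 : ℕ) := by
  unfold isect
  rw [dif_pos h]
  exact ⟨rfl, rfl⟩

lemma slice_pmul (k k' : TempEl N K) {T : ℕ} (hT : T < N) :
    slice (pmul k k') T = slice k T * slice k' T := by
  classical
  unfold slice pmul
  rw [Finset.sum_mul_sum]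
  set A := Finset.univ.filter (fun I : TInterval N => Contains I T) with hA
  set S := Finset.univ.filter
    (fun p : TInterval N × TInterval N => Contains p.1 T ∧ Contains p.2 T) with hS
  have hmaps : ∀ p ∈ S, isect p ∈ A := by
    intro p hp
    simp only [hS, Finset.mem_filter, Finset.mem_univ, true_and] at hp
    obtain ⟨⟨h1, h2⟩, h3, h4⟩ := hp
    have hlt : max (p.1.val.1 : ℕ) (p.2.val.1 : ℕ) < min (p.1.val.2 : ℕ) (p.2.val.2 : ℕ) := by
      omega
    obtain ⟨e1, e2⟩ := isect_spec p hlt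
    simp only [hA, Finset.mem_filter, Finset.mem_univ, true_and]
    exact ⟨by omega, by omega⟩
  have hfib : ∀ I ∈ A, (Finset.univ.filter (fun p : TInterval N × TInterval N =>
      max (p.1.val.1 : ℕ) (p.2.val.1 : ℕ) < min (p.1.val.2 : ℕ) (p.2.val.2 : ℕ) ∧
      (I.val.1 : ℕ) = max (p.1.val.1 : ℕ) (p.2.val.1 : ℕ) ∧
      (I.val.2 : ℕ) = min (p.1.val.2 : ℕ) (p.2.val.2 : ℕ)))
      = S.filter (fun p => isect p = I) := by
    intro I hI
    simp only [hA, Finset.mem_filter, Finset.mem_univ, true_and] at hI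
    obtain ⟨hI1, hI2⟩ := hI
    ext p
    simp only [hS, Finset.mem_filter, Finset.mem_univ, true_and]
    constructor
    · rintro ⟨hlt, hb, he⟩
      obtain ⟨e1, e2⟩ := isect_spec p hlt
      refine ⟨⟨⟨by omega, by omega⟩, by omega, by omega⟩, ?_⟩
      apply Subtype.ext
      apply Prod.ext <;> apply Fin.ext
      · rw [e1, ← hb]
      · rw [e2, ← he]
    · rintro ⟨⟨⟨h1, h2⟩, h3, h4⟩, heq⟩
      have hlt : max (p.1.val.1 : ℕ) (p.2.val.1 : ℕ) < min (p.1.val.2 : ℕ) (p.2.val.2 : ℕ) := by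
        omega
      obtain ⟨e1, e2⟩ := isect_spec p hlt
      rw [heq] at e1 e2
      exact ⟨hlt, e1, e2⟩
  have hSA : S = A ×ˢ A := by
    ext p
    simp only [hS, hA, Finset.mem_filter, Finset.mem_univ, true_and, Finset.mem_product]
  calc ∑ I ∈ A, ∑ p ∈ Finset.univ.filter (fun p : TInterval N × TInterval N =>
          max (p.1.val.1 : ℕ) (p.2.val.1 : ℕ) < min (p.1.val.2 : ℕ) (p.2.val.2 : ℕ) ∧
          (I.val.1 : ℕ) = max (p.1.val.1 : ℕ) (p.2.val.1 : ℕ) ∧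
          (I.val.2 : ℕ) = min (p.1.val.2 : ℕ) (p.2.val.2 : ℕ)), k p.1 * k' p.2
      = ∑ I ∈ A, ∑ p ∈ S.filter (fun p => isect p = I), k p.1 * k' p.2 :=
        Finset.sum_congr rfl (fun I hI => by rw [hfib I hI])
    _ = ∑ p ∈ S, k p.1 * k' p.2 := Finset.sum_fiberwise_of_maps_to hmaps _
    _ = ∑ I' ∈ A, ∑ I'' ∈ A, k I' * k' I'' := by
        rw [hSA, Finset.sum_product]

lemma slice_tadd (k k' : TempEl N K) {T : ℕ} (hT : T < N) :
    slice (tadd k k') T = slice k T + slice k' T := by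
  unfold tadd
  rw [slice_coal _ hT, slice_padd]

lemma slice_tmul (k k' : TempEl N K) {T : ℕ} (hT : T < N) :
    slice (tmul k k') T = slice k T * slice k' T := by
  unfold tmul
  rw [slice_coal _ hT, slice_pmul _ _ hT]

lemma coalesced_ext {k k' : TempEl N K} (hk : Coalesced k) (hk' : Coalesced k')
    (h : ∀ T, T < N → slice k T = slice k' T) : k = k' := by
  obtain ⟨a, rfl⟩ := hk
  obtain ⟨b, rfl⟩ := hk'
  apply coal_congr
  intro T hT
  have := h T hT
  rwa [slice_coal a hT, slice_coal b hT] at this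

lemma zero_coalesced : Coalesced (zeroT N K) := by
  refine ⟨zeroT N K, ?_⟩
  funext I
  show zeroT N K I = coal (zeroT N K) I
  unfold coal
  split
  · exact (slice_zero _).symm
  · rfl

lemma one_coalesced (hN : 1 ≤ N) : Coalesced (oneT N K) := by
  rcases subsingleton_or_nontrivial K with hK | hK
  · exact ⟨zeroT N K, funext fun I => Subsingleton.elim _ _⟩
  refine ⟨oneT N K, ?_⟩
  have hsl : ∀ S : ℕ, slice (oneT N K) S = if S < N then 1 else 0 := by
    intro S
    by_cases hS : S < N
    · rw [if_pos hS, slice_one hS]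
    · rw [if_neg hS, slice_of_le _ (not_lt.mp hS)]
  have hcp : ∀ T : ℕ, Changepoint (oneT N K) T ↔ (T = 0 ∨ T = N) := by
    intro T
    unfold Changepoint
    rw [hsl, hsl]
    constructor
    · rintro (rfl | hne)
      · exact Or.inl rfl
      · by_contra hc
        push_neg at hc
        obtain ⟨h0, hNne⟩ := hc
        apply hne
        rcases lt_or_gt_of_ne hNne with h | h
        · rw [if_pos (by omega), if_pos h]
        · rw [if_neg (by omega), if_neg (by omega)]
    · rintro (rfl | rfl)
      · exact Or.inl rfl
      · refine Or.inr ?_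
        rw [if_pos (by omega), if_neg (by omega)]
        simpa using (one_ne_zero : (1 : K) ≠ 0)
  funext I
  by_cases hI : ((I.val.1 : ℕ) = 0 ∧ (I.val.2 : ℕ) = N)
  · have hCP : CPInterval (oneT N K) I := by
      refine ⟨(hcp _).mpr (Or.inl hI.1), Or.inr hI.2, ?_⟩
      intro T' h1 h2 hc
      rw [hcp] at hc
      omega
    show oneT N K I = coal (oneT N K) I
    unfold coal
    rw [if_pos hCP, hsl, if_pos (by omega)]
    unfold oneT
    rw [if_pos hI]
  · show oneT N K I = coal (oneT N K) I
    unfold coal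
    rw [if_neg, oneT, if_neg hI]
    rintro ⟨hb, he, hmid⟩
    rw [hcp] at hb
    apply hI
    have hbI : (I.val.1 : ℕ) < (I.val.2 : ℕ) := I.property
    have hb2 := I.val.2.isLt
    have hb0 : (I.val.1 : ℕ) = 0 := by
      rcases hb with h | h
      · exact h
      · omega
    refine ⟨hb0, ?_⟩
    rcases he with h | h
    · rw [hcp] at h
      rcases h with h | h
      · omega
      · exact h
    · exact h

end TemporalK

end Aux


theorem period_semiring_is_comm_semiring {N : ℕ} (hN : 1 ≤ N)
    {K : Type*} [CommSemiring K] :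
    Coalesced (zeroT N K) ∧
    Coalesced (oneT N K) ∧
    (∀ k k' : TempEl N K, Coalesced k → Coalesced k' →
        Coalesced (tadd k k') ∧ Coalesced (tmul k k')) ∧
    (∀ k k' : TempEl N K, Coalesced k → Coalesced k' → tadd k k' = tadd k' k) ∧
    (∀ k k' k'' : TempEl N K, Coalesced k → Coalesced k' → Coalesced k'' →
        tadd (tadd k k') k'' = tadd k (tadd k' k'')) ∧
    (∀ k k' : TempEl N K, Coalesced k → Coalesced k' → tmul k k' = tmul k' k) ∧
    (∀ k k' k'' : TempEl N K, Coalesced k → Coalesced k' → Coalesced k'' →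
        tmul (tmul k k') k'' = tmul k (tmul k' k'')) ∧
    (∀ k : TempEl N K, Coalesced k → tadd k (zeroT N K) = k) ∧
    (∀ k : TempEl N K, Coalesced k → tmul k (oneT N K) = k) ∧
    (∀ k k' k'' : TempEl N K, Coalesced k → Coalesced k' → Coalesced k'' →
        tmul k (tadd k' k'') = tadd (tmul k k') (tmul k k'')) ∧
    (∀ k : TempEl N K, Coalesced k → tmul k (zeroT N K) = zeroT N K) := by
  have hz : Coalesced (zeroT N K) := zero_coalesced
  have ho : Coalesced (oneT N K) := one_coalesced hN
  refine ⟨hz, ho, ?_, ?_, ?_, ?_, ?_, ?_, ?_, ?_, ?_⟩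
  · intro k k' _ _
    exact ⟨⟨_, rfl⟩, ⟨_, rfl⟩⟩
  · intro k k' _ _
    apply coalesced_ext (by exact ⟨_, rfl⟩) (by exact ⟨_, rfl⟩)
    intro T hT
    rw [slice_tadd _ _ hT, slice_tadd _ _ hT, add_comm]
  · intro k k' k'' _ _ _
    apply coalesced_ext (by exact ⟨_, rfl⟩) (by exact ⟨_, rfl⟩)
    intro T hT
    rw [slice_tadd _ _ hT, slice_tadd _ _ hT, slice_tadd _ _ hT, slice_tadd _ _ hT, add_assoc]
  · intro k k' _ _
    apply coalesced_ext (by exact ⟨_, rfl⟩) (by exact ⟨_, rfl⟩)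
    intro T hT
    rw [slice_tmul _ _ hT, slice_tmul _ _ hT, mul_comm]
  · intro k k' k'' _ _ _
    apply coalesced_ext (by exact ⟨_, rfl⟩) (by exact ⟨_, rfl⟩)
    intro T hT
    rw [slice_tmul _ _ hT, slice_tmul _ _ hT, slice_tmul _ _ hT, slice_tmul _ _ hT, mul_assoc]
  · intro k hk
    apply coalesced_ext (by exact ⟨_, rfl⟩) hk
    intro T hT
    rw [slice_tadd _ _ hT, slice_zero, add_zero]
  · intro k hk
    apply coalesced_ext (by exact ⟨_, rfl⟩) hk
    intro T hT
    rw [slice_tmul _ _ hT, slice_one hT, mul_one]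
  · intro k k' k'' _ _ _
    apply coalesced_ext (by exact ⟨_, rfl⟩) (by exact ⟨_, rfl⟩)
    intro T hT
    rw [slice_tmul _ _ hT, slice_tadd _ _ hT, slice_tadd _ _ hT, slice_tmul _ _ hT,
      slice_tmul _ _ hT, mul_add]
  · intro k _
    apply coalesced_ext (by exact ⟨_, rfl⟩) hz
    intro T hT
    rw [slice_tmul _ _ hT, slice_zero, mul_zero]
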